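/- Every strict gammoid has weak canonical bases over closed sets: if (A, cl) = PG(A; R) for a finite set system (A; R) with δ ≥ 0, B is a flat, and ā a finite tuple from A, then there is a flat B₀ ⊆ B such that for every flat B₁ ⊆ B, d(ā/B₁) = d(ā/B) if and only if B₀ ⊆ B₁. -/

import Mathlib

open Finset

/-- Predimension of `X`: `|X| - |{r ∈ R : r ⊆ X}|`. -/
def delta {α : Type*} [DecidableEq α] (R : Finset (Finset α)) (X : Finset α) : ℤ :=
  (X.card : ℤ) - ((R.filter (fun r => r ⊆ X)).card : ℤ)

/-- `F` is a flat (closed set) of the matroid on `A` with rank function `d`. -/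
def IsFlat {α : Type*} [DecidableEq α] (A : Finset α) (d : Finset α → ℤ) (F : Finset α) :
    Prop :=
  F ⊆ A ∧ ∀ y ∈ A, d (insert y F) = d F → y ∈ F

namespace WCB

variable {α : Type*} [DecidableEq α]

/-- δ is submodular. -/
lemma delta_submod (R : Finset (Finset α)) (X Y : Finset α) :
    delta R (X ∪ Y) + delta R (X ∩ Y) ≤ delta R X + delta R Y := by
  unfold delta
  have hcard : (X ∪ Y).card + (X ∩ Y).card = X.card + Y.card :=
    Finset.card_union_add_card_inter X Y
  have h1 : (R.filter (fun r => r ⊆ X)) ∪ (R.filter (fun r => r ⊆ Y)) ⊆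
      R.filter (fun r => r ⊆ X ∪ Y) := by
    intro r hr
    simp only [Finset.mem_union, Finset.mem_filter] at *
    rcases hr with ⟨h, h'⟩ | ⟨h, h'⟩
    · exact ⟨h, h'.trans Finset.subset_union_left⟩
    · exact ⟨h, h'.trans Finset.subset_union_right⟩
  have h2 : (R.filter (fun r => r ⊆ X)) ∩ (R.filter (fun r => r ⊆ Y)) =
      R.filter (fun r => r ⊆ X ∩ Y) := by
    ext r
    simp only [Finset.mem_inter, Finset.mem_filter, Finset.subset_inter_iff]
    tauto
  have h3 := Finset.card_union_add_card_inter (R.filter (fun r => r ⊆ X))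
    (R.filter (fun r => r ⊆ Y))
  have h4 : (R.filter (fun r => r ⊆ X)).card + (R.filter (fun r => r ⊆ Y)).card ≤
      (R.filter (fun r => r ⊆ X ∪ Y)).card + (R.filter (fun r => r ⊆ X ∩ Y)).card := by
    rw [← h3, h2]
    exact Nat.add_le_add_right (Finset.card_le_card h1) _
  push_cast
  omega

/-- δ(V) - δ(P) in terms of the complement and crossing relations. -/
lemma delta_diff (R : Finset (Finset α)) (V P : Finset α) (hP : P ⊆ V) :
    delta R V - delta R P =
      ((V \ P).card : ℤ) - ((R.filter (fun r => r ⊆ V ∧ ¬ r ⊆ P)).card : ℤ) := by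
  unfold delta
  have hc : (V \ P).card + P.card = V.card := Finset.card_sdiff_add_card_eq_card hP
  have hsplit : ((R.filter (fun r => r ⊆ V)).filter (fun r => r ⊆ P)).card +
      ((R.filter (fun r => r ⊆ V)).filter (fun r => ¬ r ⊆ P)).card =
      (R.filter (fun r => r ⊆ V)).card :=
    Finset.card_filter_add_card_filter_not _
  have h1 : (R.filter (fun r => r ⊆ V)).filter (fun r => r ⊆ P) =
      R.filter (fun r => r ⊆ P) := by
    rw [Finset.filter_filter]
    apply Finset.filter_congr
    intro r _
    constructor
    · tauto
    · intro h; exact ⟨h.trans hP, h⟩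
  have h2 : (R.filter (fun r => r ⊆ V)).filter (fun r => ¬ r ⊆ P) =
      R.filter (fun r => r ⊆ V ∧ ¬ r ⊆ P) := by
    rw [Finset.filter_filter]
  rw [h1, h2] at hsplit
  push_cast [← hc, ← hsplit]
  ring

section

variable (A : Finset α) (R : Finset (Finset α)) (d : Finset α → ℤ)

lemma d_le_delta
    (hd : ∀ X ⊆ A, IsLeast {z : ℤ | ∃ Y : Finset α, X ⊆ Y ∧ Y ⊆ A ∧ z = delta R Y} (d X))
    {X Y : Finset α} (hXY : X ⊆ Y) (hYA : Y ⊆ A) : d X ≤ delta R Y :=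
  (hd X (hXY.trans hYA)).2 ⟨Y, hXY, hYA, rfl⟩

lemma exists_min
    (hd : ∀ X ⊆ A, IsLeast {z : ℤ | ∃ Y : Finset α, X ⊆ Y ∧ Y ⊆ A ∧ z = delta R Y} (d X))
    {X : Finset α} (hX : X ⊆ A) :
    ∃ Y, X ⊆ Y ∧ Y ⊆ A ∧ delta R Y = d X := by
  obtain ⟨Y, h1, h2, h3⟩ := (hd X hX).1
  exact ⟨Y, h1, h2, h3.symm⟩

lemma d_mono
    (hd : ∀ X ⊆ A, IsLeast {z : ℤ | ∃ Y : Finset α, X ⊆ Y ∧ Y ⊆ A ∧ z = delta R Y} (d X))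
    {X X' : Finset α} (hXX' : X ⊆ X') (hX' : X' ⊆ A) : d X ≤ d X' := by
  obtain ⟨Y, h1, h2, h3⟩ := exists_min A R d hd hX'
  calc d X ≤ delta R Y := d_le_delta A R d hd (hXX'.trans h1) h2
  _ = d X' := h3

/-- maximal minimizer -/
lemma exists_maxmin
    (hd : ∀ X ⊆ A, IsLeast {z : ℤ | ∃ Y : Finset α, X ⊆ Y ∧ Y ⊆ A ∧ z = delta R Y} (d X))
    {X : Finset α} (hX : X ⊆ A) :
    ∃ Z, (X ⊆ Z ∧ Z ⊆ A ∧ delta R Z = d X) ∧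
      ∀ Y, X ⊆ Y → Y ⊆ A → delta R Y = d X → Y ⊆ Z := by
  classical
  set S := A.powerset.filter (fun Y => X ⊆ Y ∧ delta R Y = d X) with hS
  have hmem : ∀ Y, Y ∈ S ↔ (X ⊆ Y ∧ Y ⊆ A ∧ delta R Y = d X) := by
    intro Y
    simp only [hS, Finset.mem_filter, Finset.mem_powerset]
    tauto
  have hne : S.Nonempty := by
    obtain ⟨Y, h1, h2, h3⟩ := exists_min A R d hd hX
    exact ⟨Y, (hmem Y).2 ⟨h1, h2, h3⟩⟩
  obtain ⟨Z, hZS, hmax⟩ := S.exists_max_image Finset.card hne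
  obtain ⟨hZ1, hZ2, hZ3⟩ := (hmem Z).1 hZS
  refine ⟨Z, ⟨hZ1, hZ2, hZ3⟩, ?_⟩
  intro Y h1 h2 h3
  have hdint : d X ≤ delta R (Z ∩ Y) :=
    d_le_delta A R d hd (Finset.subset_inter hZ1 h1) ((Finset.inter_subset_left).trans hZ2)
  have hduni : d X ≤ delta R (Z ∪ Y) :=
    d_le_delta A R d hd (hZ1.trans Finset.subset_union_left) (Finset.union_subset hZ2 h2)
  have hsub := delta_submod R Z Y
  have huni : delta R (Z ∪ Y) = d X := by omega
  have hZY : Z ∪ Y ∈ S := (hmem _).2 ⟨hZ1.trans Finset.subset_union_left,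
    Finset.union_subset hZ2 h2, huni⟩
  have hcards : (Z ∪ Y).card ≤ Z.card := hmax _ hZY
  have heq : Z ∪ Y = Z := Finset.eq_of_subset_of_card_le (by exact Finset.subset_union_left) hcards |>.symm
  intro x hx
  rw [← heq]
  exact Finset.mem_union_right _ hx

/-- minimal minimizer -/
lemma exists_minmin
    (hd : ∀ X ⊆ A, IsLeast {z : ℤ | ∃ Y : Finset α, X ⊆ Y ∧ Y ⊆ A ∧ z = delta R Y} (d X))
    {X : Finset α} (hX : X ⊆ A) :
    ∃ Z, (X ⊆ Z ∧ Z ⊆ A ∧ delta R Z = d X) ∧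
      ∀ Y, X ⊆ Y → Y ⊆ A → delta R Y = d X → Z ⊆ Y := by
  classical
  set S := A.powerset.filter (fun Y => X ⊆ Y ∧ delta R Y = d X) with hS
  have hmem : ∀ Y, Y ∈ S ↔ (X ⊆ Y ∧ Y ⊆ A ∧ delta R Y = d X) := by
    intro Y
    simp only [hS, Finset.mem_filter, Finset.mem_powerset]
    tauto
  have hne : S.Nonempty := by
    obtain ⟨Y, h1, h2, h3⟩ := exists_min A R d hd hX
    exact ⟨Y, (hmem Y).2 ⟨h1, h2, h3⟩⟩
  obtain ⟨Z, hZS, hmin⟩ := S.exists_min_image Finset.card hne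
  obtain ⟨hZ1, hZ2, hZ3⟩ := (hmem Z).1 hZS
  refine ⟨Z, ⟨hZ1, hZ2, hZ3⟩, ?_⟩
  intro Y h1 h2 h3
  have hdint : d X ≤ delta R (Z ∩ Y) :=
    d_le_delta A R d hd (Finset.subset_inter hZ1 h1) ((Finset.inter_subset_left).trans hZ2)
  have hduni : d X ≤ delta R (Z ∪ Y) :=
    d_le_delta A R d hd (hZ1.trans Finset.subset_union_left) (Finset.union_subset hZ2 h2)
  have hsub := delta_submod R Z Y
  have hint : delta R (Z ∩ Y) = d X := by omega
  have hZY : Z ∩ Y ∈ S := (hmem _).2 ⟨Finset.subset_inter hZ1 h1,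
    (Finset.inter_subset_left).trans hZ2, hint⟩
  have hcards : Z.card ≤ (Z ∩ Y).card := hmin _ hZY
  have : Z ∩ Y = Z := (Finset.eq_of_subset_of_card_le Finset.inter_subset_left hcards)
  rw [← this]
  exact Finset.inter_subset_right

/-- Any minimizer of a flat is contained in the flat. -/
lemma flat_sub
    (hd : ∀ X ⊆ A, IsLeast {z : ℤ | ∃ Y : Finset α, X ⊆ Y ∧ Y ⊆ A ∧ z = delta R Y} (d X))
    {F Y : Finset α} (hF : IsFlat A d F) (h1 : F ⊆ Y) (h2 : Y ⊆ A)
    (h3 : delta R Y = d F) : Y ⊆ F := by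
  intro y hy
  refine hF.2 y (h2 hy) (le_antisymm ?_ ?_)
  · calc d (insert y F) ≤ delta R Y := d_le_delta A R d hd (Finset.insert_subset hy h1) h2
    _ = d F := h3
  · exact d_mono A R d hd (Finset.subset_insert y F) (Finset.insert_subset (h2 hy) hF.1)

lemma flat_delta
    (hd : ∀ X ⊆ A, IsLeast {z : ℤ | ∃ Y : Finset α, X ⊆ Y ∧ Y ⊆ A ∧ z = delta R Y} (d X))
    {F : Finset α} (hF : IsFlat A d F) : delta R F = d F := by
  obtain ⟨Y, h1, h2, h3⟩ := exists_min A R d hd hF.1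
  have := flat_sub A R d hd hF h1 h2 h3
  have hYF : Y = F := Finset.Subset.antisymm this h1
  rw [hYF] at h3; exact h3

/-- A minimizer of a subset of a flat is contained in the flat. -/
lemma minimizer_subset_flat
    (hd : ∀ X ⊆ A, IsLeast {z : ℤ | ∃ Y : Finset α, X ⊆ Y ∧ Y ⊆ A ∧ z = delta R Y} (d X))
    {F S Z : Finset α} (hF : IsFlat A d F) (hSF : S ⊆ F)
    (h1 : S ⊆ Z) (h2 : Z ⊆ A) (h3 : delta R Z = d S) : Z ⊆ F := by
  have hdF := flat_delta A R d hd hF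
  intro z hz
  refine hF.2 z (h2 hz) (le_antisymm ?_ ?_)
  · have hsub := delta_submod R Z F
    have hint : d S ≤ delta R (Z ∩ F) :=
      d_le_delta A R d hd (Finset.subset_inter h1 hSF) ((Finset.inter_subset_left).trans h2)
    have hle : d (insert z F) ≤ delta R (Z ∪ F) :=
      d_le_delta A R d hd (Finset.insert_subset (Finset.mem_union_left F hz)
        Finset.subset_union_right) (Finset.union_subset h2 hF.1)
    omega
  · exact d_mono A R d hd (Finset.subset_insert z F) (Finset.insert_subset (h2 hz) hF.1)

/-- The maximal minimizer is a flat. -/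
lemma maxmin_flat
    (hd : ∀ X ⊆ A, IsLeast {z : ℤ | ∃ Y : Finset α, X ⊆ Y ∧ Y ⊆ A ∧ z = delta R Y} (d X))
    {S Z : Finset α}
    (h1 : S ⊆ Z) (h2 : Z ⊆ A) (h3 : delta R Z = d S)
    (hmax : ∀ Y, S ⊆ Y → Y ⊆ A → delta R Y = d S → Y ⊆ Z) : IsFlat A d Z := by
  have hdZ : d Z = d S := by
    have hle : d Z ≤ delta R Z := d_le_delta A R d hd (Finset.Subset.refl Z) h2
    have hge : d S ≤ d Z := d_mono A R d hd h1 h2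
    omega
  refine ⟨h2, ?_⟩
  intro y hy hins
  obtain ⟨W, hW1, hW2, hW3⟩ := exists_min A R d hd
    (show insert y Z ⊆ A from Finset.insert_subset hy h2)
  have hWmin : delta R W = d S := by rw [hW3, hins, hdZ]
  have hWZ : W ⊆ Z := hmax W (h1.trans ((Finset.subset_insert y Z).trans hW1)) hW2 hWmin
  exact hWZ (hW1 (Finset.mem_insert_self y Z))

end
end WCB

/-- Strict gammoids have weak canonical bases over closed sets: for a flat `B` and a
finite tuple `a`, there is a flat `B₀ ⊆ B` such that for every flat `B₁ ⊆ B`,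
`d(a/B₁) = d(a/B)` iff `B₀ ⊆ B₁`. -/
theorem weak_canonical_bases {α : Type*} [DecidableEq α]
    (A : Finset α) (R : Finset (Finset α))
    (hR : ∀ r ∈ R, r.Nonempty ∧ r ⊆ A)
    (hpos : ∀ X ⊆ A, 0 ≤ delta R X)
    (d : Finset α → ℤ)
    (hd : ∀ X ⊆ A, IsLeast {z : ℤ | ∃ Y : Finset α, X ⊆ Y ∧ Y ⊆ A ∧ z = delta R Y} (d X))
    (B : Finset α) (hB : IsFlat A d B)
    (a : Finset α) (ha : a ⊆ A) :
    ∃ B₀ : Finset α, IsFlat A d B₀ ∧ B₀ ⊆ B ∧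
      ∀ B₁ : Finset α, IsFlat A d B₁ → B₁ ⊆ B →
        (d (a ∪ B₁) - d B₁ = d (a ∪ B) - d B ↔ B₀ ⊆ B₁) := by
  classical
  have hBA : B ⊆ A := hB.1
  have haB : a ∪ B ⊆ A := Finset.union_subset ha hBA
  obtain ⟨Y, ⟨hY1, hY2, hY3⟩, hYmin⟩ := WCB.exists_minmin A R d hd haB
  have hBY : B ⊆ Y := Finset.subset_union_right.trans hY1
  have haY : a ⊆ Y := Finset.subset_union_left.trans hY1
  have hdB : delta R B = d B := WCB.flat_delta A R d hd hB
  set C := R.filter (fun r => r ⊆ Y ∧ ¬ r ⊆ B) with hCdef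
  set N := (a ∪ C.sup id) ∩ B with hNdef
  have hNB : N ⊆ B := Finset.inter_subset_right
  have hNA : N ⊆ A := hNB.trans hBA
  obtain ⟨B₀, ⟨hB01, hB02, hB03⟩, hB0max⟩ := WCB.exists_maxmin A R d hd hNA
  have hB0flat : IsFlat A d B₀ := WCB.maxmin_flat A R d hd hB01 hB02 hB03 hB0max
  have hB0B : B₀ ⊆ B := WCB.minimizer_subset_flat A R d hd hB hNB hB01 hB02 hB03
  have hYB : delta R Y - delta R B = ((Y \ B).card : ℤ) - (C.card : ℤ) := by
    have h := WCB.delta_diff R Y B hBY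
    rw [← hCdef] at h
    exact h
  refine ⟨B₀, hB0flat, hB0B, ?_⟩
  intro B₁ hB₁ hB₁B
  have hB₁A : B₁ ⊆ A := hB₁.1
  have hdB₁ : delta R B₁ = d B₁ := WCB.flat_delta A R d hd hB₁
  have hB₁Y : B₁ ⊆ Y := hB₁B.trans hBY
  set Y' := (Y \ B) ∪ B₁ with hY'def
  have hY'Y : Y' ⊆ Y := Finset.union_subset (Finset.sdiff_subset) hB₁Y
  have hY'A : Y' ⊆ A := hY'Y.trans hY2
  have hB₁Y' : B₁ ⊆ Y' := Finset.subset_union_right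
  have hY'B : Y' ∩ B = B₁ := by
    ext x
    simp only [hY'def, Finset.mem_inter, Finset.mem_union, Finset.mem_sdiff]
    constructor
    · rintro ⟨h1 | h1, h2⟩
      · exact absurd h2 h1.2
      · exact h1
    · intro h; exact ⟨Or.inr h, hB₁B h⟩
  have hY'sd : Y' \ B₁ = Y \ B := by
    ext x
    simp only [hY'def, Finset.mem_sdiff, Finset.mem_union]
    constructor
    · rintro ⟨h1 | h1, h2⟩
      · exact h1
      · exact absurd h1 h2
    · intro h
      exact ⟨Or.inl h, fun hx => h.2 (hB₁B hx)⟩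
  set C' := R.filter (fun r => r ⊆ Y' ∧ ¬ r ⊆ B₁) with hC'def
  have hY'B₁ : delta R Y' - delta R B₁ = ((Y \ B).card : ℤ) - (C'.card : ℤ) := by
    have h := WCB.delta_diff R Y' B₁ hB₁Y'
    rw [hY'sd, ← hC'def] at h
    exact h
  have hC'C : C' ⊆ C := by
    intro r hr
    rw [hC'def, Finset.mem_filter] at hr
    rw [hCdef, Finset.mem_filter]
    refine ⟨hr.1, hr.2.1.trans hY'Y, fun hrB => hr.2.2 ?_⟩
    rw [← hY'B]
    exact Finset.subset_inter hr.2.1 hrB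
  constructor
  · intro hEq
    obtain ⟨W, hW1, hW2, hW3⟩ := WCB.exists_min A R d hd
      (show a ∪ B₁ ⊆ A from Finset.union_subset ha hB₁A)
    have haW : a ⊆ W := Finset.subset_union_left.trans hW1
    have hB₁W : B₁ ⊆ W := Finset.subset_union_right.trans hW1
    have hWBsub := WCB.delta_submod R W B
    have hWuB : d (a ∪ B) ≤ delta R (W ∪ B) := WCB.d_le_delta A R d hd
      (Finset.union_subset (haW.trans Finset.subset_union_left) Finset.subset_union_right)
      (Finset.union_subset hW2 hBA)
    have hWiB : d B₁ ≤ delta R (W ∩ B) := WCB.d_le_delta A R d hd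
      (Finset.subset_inter hB₁W hB₁B) ((Finset.inter_subset_left).trans hW2)
    have hWuB' : delta R (W ∪ B) = d (a ∪ B) := by omega
    have hWiB' : delta R (W ∩ B) = d B₁ := by omega
    have hWB : W ∩ B = B₁ := Finset.Subset.antisymm
      (WCB.flat_sub A R d hd hB₁ (Finset.subset_inter hB₁W hB₁B)
        ((Finset.inter_subset_left).trans hW2) hWiB')
      (Finset.subset_inter hB₁W hB₁B)
    have hYWB : Y ⊆ W ∪ B := hYmin _
      (Finset.union_subset (haW.trans Finset.subset_union_left) Finset.subset_union_right)
      (Finset.union_subset hW2 hBA) hWuB'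
    have hYWsub := WCB.delta_submod R Y W
    have hYuW : d (a ∪ B) ≤ delta R (Y ∪ W) := WCB.d_le_delta A R d hd
      (hY1.trans Finset.subset_union_left) (Finset.union_subset hY2 hW2)
    have hUge : d (a ∪ B₁) ≤ delta R (Y ∩ W) := WCB.d_le_delta A R d hd
      (Finset.union_subset (Finset.subset_inter haY haW) (Finset.subset_inter hB₁Y hB₁W))
      ((Finset.inter_subset_left).trans hY2)
    have hU : delta R (Y ∩ W) = d (a ∪ B₁) := by omega
    have hUY' : Y ∩ W = Y' := by
      apply Finset.Subset.antisymm
      · intro x hx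
        rcases Finset.mem_inter.1 hx with ⟨hxY, hxW⟩
        by_cases hxB : x ∈ B
        · exact Finset.mem_union_right _ (hWB ▸ Finset.mem_inter.2 ⟨hxW, hxB⟩)
        · exact Finset.mem_union_left _ (Finset.mem_sdiff.2 ⟨hxY, hxB⟩)
      · apply Finset.union_subset
        · intro x hx
          rcases Finset.mem_sdiff.1 hx with ⟨hxY, hxB⟩
          refine Finset.mem_inter.2 ⟨hxY, ?_⟩
          rcases Finset.mem_union.1 (hYWB hxY) with h | h
          · exact h
          · exact absurd h hxB
        · exact Finset.subset_inter hB₁Y hB₁W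
    have hY'δ : delta R Y' = d (a ∪ B₁) := by rw [← hUY']; exact hU
    have hδeq : delta R Y' - delta R B₁ = delta R Y - delta R B := by
      rw [hY'δ, hdB₁, hY3, hdB]
      exact hEq
    have hcard : (C.card : ℤ) ≤ (C'.card : ℤ) := by omega
    have hC'Ceq : C' = C := Finset.eq_of_subset_of_card_le hC'C (by exact_mod_cast hcard)
    have haY' : a ⊆ Y' := by
      rw [← hUY']
      exact Finset.subset_inter haY haW
    have hNB₁ : N ⊆ B₁ := by
      intro x hx
      rw [hNdef] at hx
      rcases Finset.mem_inter.1 hx with ⟨hx1, hxB⟩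
      rw [← hY'B]
      refine Finset.mem_inter.2 ⟨?_, hxB⟩
      rcases Finset.mem_union.1 hx1 with hxa | hxC
      · exact haY' hxa
      · obtain ⟨r, hrC, hxr⟩ := Finset.mem_sup.1 hxC
        have hrC' : r ∈ C' := hC'Ceq ▸ hrC
        have : r ⊆ Y' := (Finset.mem_filter.1 hrC').2.1
        exact this hxr
    exact WCB.minimizer_subset_flat A R d hd hB₁ hNB₁ hB01 hB02 hB03
  · intro hB0B₁
    have hNB₁ : N ⊆ B₁ := hB01.trans hB0B₁
    have hCC' : C ⊆ C' := by
      intro r hr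
      have hr' := hr
      rw [hCdef, Finset.mem_filter] at hr'
      rw [hC'def, Finset.mem_filter]
      refine ⟨hr'.1, ?_, fun h => hr'.2.2 (h.trans hB₁B)⟩
      intro x hxr
      by_cases hxB : x ∈ B
      · refine Finset.mem_union_right _ (hNB₁ ?_)
        rw [hNdef]
        refine Finset.mem_inter.2 ⟨Finset.mem_union_right _ ?_, hxB⟩
        exact Finset.mem_sup.2 ⟨r, hr, hxr⟩
      · exact Finset.mem_union_left _ (Finset.mem_sdiff.2 ⟨hr'.2.1 hxr, hxB⟩)
    have hCeq : (C'.card : ℤ) = (C.card : ℤ) := by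
      rw [Finset.Subset.antisymm hC'C hCC']
    have haY' : a ⊆ Y' := by
      intro x hxa
      by_cases hxB : x ∈ B
      · refine Finset.mem_union_right _ (hNB₁ ?_)
        rw [hNdef]
        exact Finset.mem_inter.2 ⟨Finset.mem_union_left _ hxa, hxB⟩
      · exact Finset.mem_union_left _ (Finset.mem_sdiff.2 ⟨haY hxa, hxB⟩)
    have hle : d (a ∪ B₁) ≤ delta R Y' := WCB.d_le_delta A R d hd
      (Finset.union_subset haY' hB₁Y') hY'A
    obtain ⟨W, hW1, hW2, hW3⟩ := WCB.exists_min A R d hd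
      (show a ∪ B₁ ⊆ A from Finset.union_subset ha hB₁A)
    have haW : a ⊆ W := Finset.subset_union_left.trans hW1
    have hB₁W : B₁ ⊆ W := Finset.subset_union_right.trans hW1
    have hWBsub := WCB.delta_submod R W B
    have hWuB : d (a ∪ B) ≤ delta R (W ∪ B) := WCB.d_le_delta A R d hd
      (Finset.union_subset (haW.trans Finset.subset_union_left) Finset.subset_union_right)
      (Finset.union_subset hW2 hBA)
    have hWiB : d B₁ ≤ delta R (W ∩ B) := WCB.d_le_delta A R d hd
      (Finset.subset_inter hB₁W hB₁B) ((Finset.inter_subset_left).trans hW2)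
    -- from hle: d(a∪B₁) - d B₁ ≤ d(a∪B) - d B ; from submod: ≥.
    omega
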